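/- Let F : [a,b] → [0,1] be a C² cumulative distribution function with density f satisfying f(θ) ≥ β₁ > 0 and f'(θ) ≥ -β₂ for all θ ∈ [a,b]. Then for any integer n ≥ 2 + β₂/β₁², the function θ ↦ F(θ)^(n-1) is convex on [a,b]. -/

import Mathlib

/-- If F is a C² CDF on [a,b] with density f ≥ β₁ > 0 and f' ≥ -β₂,
then for n ≥ 2 + β₂/β₁², the function θ ↦ F(θ)^(n-1) is convex on [a,b]. -/
theorem stmt_0 (a b β₁ β₂ : ℝ) (F f f' : ℝ → ℝ) (n : ℕ)
    (hab : a < b) (hβ₁ : 0 < β₁) (hβ₂ : 0 < β₂)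
    (hF : ∀ θ ∈ Set.Icc a b, HasDerivAt F (f θ) θ)
    (hf : ∀ θ ∈ Set.Icc a b, HasDerivAt f (f' θ) θ)
    (hf'cont : ContinuousOn f' (Set.Icc a b))
    (hFmono : MonotoneOn F (Set.Icc a b))
    (hFa : F a = 0) (hFb : F b = 1)
    (hfpos : ∀ θ ∈ Set.Icc a b, β₁ ≤ f θ)
    (hf'lb : ∀ θ ∈ Set.Icc a b, -β₂ ≤ f' θ)
    (hn : (2 : ℝ) + β₂ / β₁ ^ 2 ≤ n) :
    ConvexOn ℝ (Set.Icc a b) (fun θ => F θ ^ (n - 1)) := by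
  -- n ≥ 3
  have hβ₁2 : (0:ℝ) < β₁ ^ 2 := by positivity
  have hn2 : (2:ℝ) < n := by
    have : 0 < β₂ / β₁ ^ 2 := div_pos hβ₂ hβ₁2
    linarith
  have hn3 : 3 ≤ n := by
    have h : 2 < n := by exact_mod_cast hn2
    omega
  obtain ⟨k, rfl⟩ : ∃ k, n = k + 3 := ⟨n - 3, by omega⟩
  have hkey : β₂ ≤ ((k:ℝ) + 1) * β₁ ^ 2 := by
    have h1 : β₂ / β₁ ^ 2 ≤ (k:ℝ) + 1 := by push_cast at hn ⊢; linarith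
    calc β₂ = (β₂ / β₁ ^ 2) * β₁ ^ 2 := by field_simp
    _ ≤ ((k:ℝ) + 1) * β₁ ^ 2 := by nlinarith
  have hsub : k + 3 - 1 = k + 2 := by omega
  rw [hsub]
  set g : ℝ → ℝ := fun θ => F θ ^ (k + 2) with hg
  have hint : interior (Set.Icc a b) = Set.Ioo a b := interior_Icc
  have hmem : ∀ θ ∈ Set.Ioo a b, θ ∈ Set.Icc a b := fun θ hθ => Set.Ioo_subset_Icc_self hθ
  -- derivative of g
  have hg' : ∀ θ ∈ Set.Ioo a b,
      HasDerivAt g ((k + 2 : ℕ) * F θ ^ (k + 1) * f θ) θ := by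
    intro θ hθ
    simpa using (hF θ (hmem θ hθ)).fun_pow (k + 2)
  have hderivg : ∀ θ ∈ Set.Ioo a b,
      deriv g θ = (k + 2 : ℕ) * F θ ^ (k + 1) * f θ := fun θ hθ => (hg' θ hθ).deriv
  -- second derivative
  have hh' : ∀ θ ∈ Set.Ioo a b,
      HasDerivAt (fun θ => ((k:ℝ) + 2) * F θ ^ (k + 1) * f θ)
        (((k:ℝ) + 2) * (((k + 1 : ℕ) * F θ ^ k * f θ) * f θ + F θ ^ (k + 1) * f' θ)) θ := by
    intro θ hθ
    have h1 := ((hF θ (hmem θ hθ)).pow (k + 1)).mul (hf θ (hmem θ hθ))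
    have h2 := h1.const_mul ((k:ℝ) + 2)
    simpa [mul_assoc, Nat.add_sub_cancel] using h2
  have hderiv2 : ∀ θ ∈ Set.Ioo a b,
      deriv (deriv g) θ =
        ((k:ℝ) + 2) * (((k + 1 : ℕ) * F θ ^ k * f θ) * f θ + F θ ^ (k + 1) * f' θ) := by
    intro θ hθ
    have heq : deriv g =ᶠ[nhds θ] (fun θ => ((k:ℝ) + 2) * F θ ^ (k + 1) * f θ) := by
      filter_upwards [isOpen_Ioo.mem_nhds hθ] with x hx
      rw [hderivg x hx]; push_cast; ring
    rw [Filter.EventuallyEq.deriv_eq heq]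
    exact (hh' θ hθ).deriv
  -- bounds on F
  have hF01 : ∀ θ ∈ Set.Icc a b, 0 ≤ F θ ∧ F θ ≤ 1 := by
    intro θ hθ
    constructor
    · rw [← hFa]; exact hFmono (Set.left_mem_Icc.2 hab.le) hθ hθ.1
    · rw [← hFb]; exact hFmono hθ (Set.right_mem_Icc.2 hab.le) hθ.2
  apply convexOn_of_deriv2_nonneg (convex_Icc a b)
  · exact fun θ hθ => ((hF θ hθ).continuousAt.continuousWithinAt).pow (k + 2)
  · rw [hint]; exact fun θ hθ => (hg' θ hθ).differentiableAt.differentiableWithinAt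
  · rw [hint]
    intro θ hθ
    have heq : deriv g =ᶠ[nhds θ] (fun θ => ((k:ℝ) + 2) * F θ ^ (k + 1) * f θ) := by
      filter_upwards [isOpen_Ioo.mem_nhds hθ] with x hx
      rw [hderivg x hx]; push_cast; ring
    exact ((hh' θ hθ).differentiableAt.congr_of_eventuallyEq heq).differentiableWithinAt
  · rw [hint]
    intro θ hθ
    have h2 := hderiv2 θ hθ
    simp only [Function.iterate_succ, Function.iterate_zero, Function.comp_apply, id_eq]
    rw [h2]
    have hθ' := hmem θ hθ
    obtain ⟨hF0, hF1⟩ := hF01 θ hθ'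
    have hfθ := hfpos θ hθ'
    have hf'θ := hf'lb θ hθ'
    have hPk : (0:ℝ) ≤ F θ ^ k := pow_nonneg hF0 k
    have hFf' : -β₂ ≤ F θ * f' θ := by nlinarith
    have hfac : F θ ^ (k + 1) = F θ ^ k * F θ := pow_succ _ _
    rw [hfac]
    push_cast
    have hff : β₁ ^ 2 ≤ f θ * f θ := by nlinarith
    have hk0 : (0:ℝ) ≤ (k:ℝ) + 1 := by positivity
    have hinner : 0 ≤ ((k:ℝ) + 1) * (f θ * f θ) + F θ * f' θ := by
      nlinarith [mul_le_mul_of_nonneg_left hff hk0]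
    nlinarith [mul_nonneg hPk hinner]
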